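/- arXiv:2407.12221 — 2 statements merged into one kernel-verified Lean document; each statement's English description precedes it below -/
import Mathlib

section
/- Let Ψ be a Hilbert–Schmidt operator from H^L to H (H a separable Hilbert space), let (c_i) be a CONS of H^L and (d_j) a CONS of H, and suppose Ψ = Σ_{i=1}^K Σ_{j=1}^K p_{ij} (c_i ⊗ d_j) for real coefficients p_{ij}. Let C be the positive semi-definite self-adjoint operator on H^L with eigenpairs (λ_i, c_i), and let θ > 0. Then ‖Ψ(C(C+θI)^{−1} P_K − I)‖_HS ≤ θ (λ_K + θ)^{−1} ‖Ψ‖_HS, where P_K projects onto span{c_1,...,c_K} and λ_1 ≥ ... ≥ λ_K > 0. -/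
open scoped RealInnerProductSpace

set_option synthInstance.maxHeartbeats 1000000
set_option maxHeartbeats 1000000

/-- The Hilbert–Schmidt norm of `T`, computed in the Hilbert basis `c` of the
domain: `‖T‖_HS = √(∑ i, ‖T (c i)‖²)`. -/
noncomputable def hsNorm {E H : Type*} [NormedAddCommGroup E] [InnerProductSpace ℝ E]
    [NormedAddCommGroup H] [InnerProductSpace ℝ H]
    (c : HilbertBasis ℕ ℝ E) (T : E →L[ℝ] H) : ℝ :=
  Real.sqrt (∑' i, ‖T (c i)‖ ^ 2)

/-- Let `Ψ : H^L → H` be Hilbert–Schmidt with finite expansion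
`Ψ = ∑_{i,j ≤ K} p_{ij} (c_i ⊗ d_j)` in the tensor CONS built from a Hilbert basis `c` of
`H^L` and `d` of `H`, and let `C` be positive self-adjoint with eigenpairs `(λ_i, c_i)`,
`λ_1 ≥ … ≥ λ_K > 0`, `θ > 0`.  Then
`‖Ψ (C (C + θI)⁻¹ P_K − I)‖_HS ≤ θ (λ_K + θ)⁻¹ ‖Ψ‖_HS`, where `P_K` projects onto
`span{c_1, …, c_K}` and `R` denotes the inverse of `C + θI` (indices 0-based). -/
theorem tikhonov_truncation_hs_bound {H : Type*} [NormedAddCommGroup H]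
    [InnerProductSpace ℝ H] [CompleteSpace H] (L K : ℕ) (hK : 0 < K)
    (c : HilbertBasis ℕ ℝ (PiLp 2 (fun _ : Fin L => H))) (d : HilbertBasis ℕ ℝ H)
    (p : ℕ → ℕ → ℝ)
    (Ψ : PiLp 2 (fun _ : Fin L => H) →L[ℝ] H)
    (hΨ : ∀ x, Ψ x = ∑ i ∈ Finset.range K, ∑ j ∈ Finset.range K,
      p i j • (⟪(c i : PiLp 2 (fun _ : Fin L => H)), x⟫ • (d j : H)))
    (C R P : PiLp 2 (fun _ : Fin L => H) →L[ℝ] PiLp 2 (fun _ : Fin L => H))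
    (hCsa : ∀ u v, ⟪C u, v⟫ = ⟪u, C v⟫)
    (lam : ℕ → ℝ) (hanti : Antitone lam) (hpos : ∀ i, 0 ≤ lam i)
    (hlamK : 0 < lam (K - 1))
    (hC : ∀ i, C (c i) = lam i • c i)
    (θ : ℝ) (hθ : 0 < θ)
    (hR1 : ∀ x, R (C x + θ • x) = x)
    (hR2 : ∀ x, C (R x) + θ • R x = x)
    (hP : ∀ x, P x = ∑ j ∈ Finset.range K,
      ⟪(c j : PiLp 2 (fun _ : Fin L => H)), x⟫ • (c j : PiLp 2 (fun _ : Fin L => H))) :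
    hsNorm c (Ψ ∘L (C ∘L R ∘L P - 1)) ≤ θ * (lam (K - 1) + θ)⁻¹ * hsNorm c Ψ := by
  classical
  have hinner : ∀ i j : ℕ, ⟪(c i : PiLp 2 (fun _ : Fin L => H)), (c j : PiLp 2 (fun _ : Fin L => H))⟫ = if i = j then (1:ℝ) else 0 :=
    orthonormal_iff_ite.mp c.orthonormal
  have hden : ∀ i, (0:ℝ) < lam i + θ := fun i => add_pos_of_nonneg_of_pos (hpos i) hθ
  have hΨzero : ∀ i, K ≤ i → Ψ (c i) = 0 := by
    intro i hi
    rw [hΨ]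
    refine Finset.sum_eq_zero fun a ha => Finset.sum_eq_zero fun b hb => ?_
    have hai : a ≠ i := by have := Finset.mem_range.mp ha; omega
    rw [hinner, if_neg hai]
    simp
  have hPc : ∀ i, P (c i) = if i < K then (c i : PiLp 2 (fun _ : Fin L => H)) else 0 := by
    intro i
    rw [hP]
    split_ifs with h
    · rw [Finset.sum_eq_single i]
      · rw [hinner, if_pos rfl, one_smul]
      · intro b hb hbi
        rw [hinner, if_neg hbi, zero_smul]
      · intro hi; exact absurd (Finset.mem_range.mpr h) hi
    · refine Finset.sum_eq_zero fun b hb => ?_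
      have hbi : b ≠ i := by have := Finset.mem_range.mp hb; omega
      rw [hinner, if_neg hbi, zero_smul]
  have hRc : ∀ i, R (c i) = (lam i + θ)⁻¹ • (c i : PiLp 2 (fun _ : Fin L => H)) := by
    intro i
    have hne : lam i + θ ≠ 0 := (hden i).ne'
    have hx : C ((lam i + θ)⁻¹ • (c i : PiLp 2 (fun _ : Fin L => H)))
        + θ • ((lam i + θ)⁻¹ • (c i : PiLp 2 (fun _ : Fin L => H))) = c i := by
      rw [map_smul, hC i, smul_smul, smul_smul, ← add_smul]
      have h1 : (lam i + θ)⁻¹ * lam i + θ * (lam i + θ)⁻¹ = 1 := by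
        field_simp
      rw [h1, one_smul]
    have h := hR1 ((lam i + θ)⁻¹ • (c i : PiLp 2 (fun _ : Fin L => H)))
    rwa [hx] at h
  have hT : ∀ i, (Ψ ∘L (C ∘L R ∘L P - 1)) (c i)
      = (if i < K then (-(θ / (lam i + θ))) else 0) • Ψ (c i) := by
    intro i
    have hne : lam i + θ ≠ 0 := (hden i).ne'
    simp only [ContinuousLinearMap.comp_apply, ContinuousLinearMap.sub_apply,
      ContinuousLinearMap.coe_sub', ContinuousLinearMap.one_apply, Pi.sub_apply]
    by_cases h : i < K
    · rw [if_pos h, hPc i, if_pos h, hRc i, map_smul, hC i, smul_smul, map_sub, map_smul]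
      have key : (lam i + θ)⁻¹ * lam i - 1 = -(θ / (lam i + θ)) := by
        field_simp
        ring
      rw [← key, sub_smul, one_smul]
    · rw [if_neg h, hPc i, if_neg h, map_zero, map_zero, zero_sub, map_neg,
        hΨzero i (le_of_not_gt h), neg_zero, zero_smul]
  have hTnorm : ∀ i, ‖(Ψ ∘L (C ∘L R ∘L P - 1)) (c i)‖ ^ 2
      = if i < K then (θ / (lam i + θ)) ^ 2 * ‖Ψ (c i)‖ ^ 2 else 0 := by
    intro i
    rw [hT i]
    split_ifs with h
    · rw [norm_smul, mul_pow, Real.norm_eq_abs, sq_abs, neg_pow]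
      ring
    · simp
  have htsumT : (∑' i, ‖(Ψ ∘L (C ∘L R ∘L P - 1)) (c i)‖ ^ 2)
      = ∑ i ∈ Finset.range K, (θ / (lam i + θ)) ^ 2 * ‖Ψ (c i)‖ ^ 2 := by
    rw [tsum_eq_sum (s := Finset.range K) (fun i hi => by
      rw [hTnorm i, if_neg (by simpa using hi)])]
    exact Finset.sum_congr rfl fun i hi => by
      rw [hTnorm i, if_pos (Finset.mem_range.mp hi)]
  have htsumΨ : (∑' i, ‖Ψ (c i)‖ ^ 2) = ∑ i ∈ Finset.range K, ‖Ψ (c i)‖ ^ 2 := by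
    exact tsum_eq_sum (s := Finset.range K) (fun i hi => by
      rw [hΨzero i (by simpa using hi)]; simp)
  have hdK : (0:ℝ) < lam (K - 1) + θ := hden (K - 1)
  have hknn : (0:ℝ) ≤ θ * (lam (K - 1) + θ)⁻¹ := by positivity
  rw [hsNorm, hsNorm, htsumT, htsumΨ]
  have hrhs : θ * (lam (K - 1) + θ)⁻¹ * Real.sqrt (∑ i ∈ Finset.range K, ‖Ψ (c i)‖ ^ 2)
      = Real.sqrt ((θ * (lam (K - 1) + θ)⁻¹) ^ 2 * ∑ i ∈ Finset.range K, ‖Ψ (c i)‖ ^ 2) := by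
    rw [Real.sqrt_mul (by positivity), Real.sqrt_sq hknn]
  rw [hrhs]
  apply Real.sqrt_le_sqrt
  rw [Finset.mul_sum]
  refine Finset.sum_le_sum fun i hi => ?_
  have hiK : i < K := Finset.mem_range.mp hi
  have hle : lam (K - 1) ≤ lam i := hanti (by omega)
  have hfrac : θ / (lam i + θ) ≤ θ / (lam (K - 1) + θ) := by
    apply div_le_div_of_nonneg_left hθ.le hdK (by linarith)
  have h2 : (θ / (lam i + θ)) ^ 2 ≤ (θ * (lam (K - 1) + θ)⁻¹) ^ 2 := by
    rw [← div_eq_mul_inv]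
    exact pow_le_pow_left₀ (div_nonneg hθ.le (hden i).le) hfrac 2
  exact mul_le_mul_of_nonneg_right h2 (by positivity)
end

section
/- Let (ε_k)_{k∈ℤ} be an H-valued white noise (centered, weakly stationary, pairwise uncorrelated) with covariance operator C_ε having eigenpairs (λ_k, c_k), λ_k > 0 (C_ε injective). Let (A_ℓ)_{ℓ≥0} and (B_ℓ)_{ℓ≥0} be bounded operators with Σ‖A_ℓ‖ < ∞ and Σ‖B_ℓ‖ < ∞. If Σ_{ℓ≥0} A_ℓ(ε_{i−ℓ}) = Σ_{ℓ≥0} B_ℓ(ε_{i−ℓ}) almost surely for some i, then A_ℓ = B_ℓ for all ℓ. -/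
open scoped RealInnerProductSpace
open MeasureTheory
open scoped ENNReal NNReal

/-- Let `(ε_k)_{k∈ℤ}` be an `H`-valued white noise (centered, weakly
stationary, pairwise uncorrelated) whose covariance operator `C_ε` has eigenpairs
`(λ_k, c_k)` with `λ_k > 0` (so `C_ε` is injective).  If `(A_ℓ)` and `(B_ℓ)` are bounded
operators with summable norms and `∑_ℓ A_ℓ(ε_{i−ℓ}) = ∑_ℓ B_ℓ(ε_{i−ℓ})` almost surely
(both series converging to a common limit `Z`), then `A_ℓ = B_ℓ` for all `ℓ`. -/
theorem white_noise_series_identification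
    {Ω : Type*} [MeasurableSpace Ω] (μ : Measure Ω) [IsProbabilityMeasure μ]
    {H : Type*} [NormedAddCommGroup H] [InnerProductSpace ℝ H] [CompleteSpace H]
    (ε : ℤ → Ω → H)
    (hL2 : ∀ k, MemLp (ε k) 2 μ)
    (hcentered : ∀ k, ∫ ω, ε k ω ∂μ = 0)
    (Cε : H →L[ℝ] H)
    (hcov : ∀ (k : ℤ) (u v : H), ∫ ω, ⟪ε k ω, u⟫ * ⟪ε k ω, v⟫ ∂μ = ⟪Cε u, v⟫)
    (huncorr : ∀ (k l : ℤ), k ≠ l → ∀ u v : H, ∫ ω, ⟪ε k ω, u⟫ * ⟪ε l ω, v⟫ ∂μ = 0)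
    (c : HilbertBasis ℕ ℝ H) (lam : ℕ → ℝ) (hlam : ∀ k, 0 < lam k)
    (hCε : ∀ k, Cε (c k) = lam k • c k)
    (A B : ℕ → H →L[ℝ] H)
    (hA : Summable fun ℓ => ‖A ℓ‖) (hB : Summable fun ℓ => ‖B ℓ‖)
    (i : ℤ) (Z : Ω → H)
    (hsum : ∀ᵐ ω ∂μ,
      HasSum (fun ℓ : ℕ => A ℓ (ε (i - (ℓ : ℤ)) ω)) (Z ω) ∧
      HasSum (fun ℓ : ℕ => B ℓ (ε (i - (ℓ : ℤ)) ω)) (Z ω)) :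
    ∀ ℓ, A ℓ = B ℓ := by
  classical
  have hmeas : ∀ k : ℤ, AEStronglyMeasurable (ε k) μ := fun k => (hL2 k).aestronglyMeasurable
  have hinner : ∀ (k : ℤ) (u : H), MemLp (fun ω => ⟪ε k ω, u⟫) 2 μ :=
    fun k u => (hL2 k).inner_const u
  have hint : ∀ (k l : ℤ) (u v : H), Integrable (fun ω => ⟪ε k ω, u⟫ * ⟪ε l ω, v⟫) μ := by
    intro k l u v
    have h := (hinner l v).smul (hinner k u) (p := 2) (q := 2) (r := 1)
    rw [memLp_one_iff_integrable] at h
    exact h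
  -- the variance along each basis vector
  have hvar : ∀ (k : ℤ) (m : ℕ), ∫ ω, ⟪ε k ω, c m⟫ * ⟪ε k ω, c m⟫ ∂μ = lam m := by
    intro k m
    rw [hcov k (c m) (c m), hCε m, real_inner_smul_left, real_inner_self_eq_norm_sq,
      c.orthonormal.1 m]
    norm_num
  -- uniform second moment
  set M : ℝ≥0∞ := ∑' m, ENNReal.ofReal (lam m) with hM
  have key2 : ∀ k : ℤ, ∫⁻ ω, (‖ε k ω‖₊ : ℝ≥0∞) ^ 2 ∂μ = M := by
    intro k
    have hx : ∀ ω : Ω, ((‖ε k ω‖₊ : ℝ≥0∞)) ^ 2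
        = ∑' m, ENNReal.ofReal (⟪ε k ω, c m⟫ * ⟪ε k ω, c m⟫) := by
      intro ω
      have h1 : HasSum (fun m => ⟪ε k ω, c m⟫ * ⟪c m, ε k ω⟫) ⟪ε k ω, ε k ω⟫ :=
        c.hasSum_inner_mul_inner _ _
      have h1' : HasSum (fun m => ⟪ε k ω, c m⟫ * ⟪ε k ω, c m⟫) (‖ε k ω‖ ^ 2) := by
        simpa [real_inner_comm (ε k ω), real_inner_self_eq_norm_sq] using h1
      have h2 : (‖ε k ω‖ ^ 2) = ∑' m, ⟪ε k ω, c m⟫ * ⟪ε k ω, c m⟫ := h1'.tsum_eq.symm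
      have h3 : ((‖ε k ω‖₊ : ℝ≥0∞)) ^ 2 = ENNReal.ofReal (‖ε k ω‖ ^ 2) := by
        rw [ENNReal.ofReal_pow (norm_nonneg _), ofReal_norm, enorm_eq_nnnorm]
      rw [h3, h2, ENNReal.ofReal_tsum_of_nonneg (fun m => mul_self_nonneg _) h1'.summable]
    calc ∫⁻ ω, (‖ε k ω‖₊ : ℝ≥0∞) ^ 2 ∂μ
        = ∫⁻ ω, ∑' m, ENNReal.ofReal (⟪ε k ω, c m⟫ * ⟪ε k ω, c m⟫) ∂μ := by
          simp_rw [hx]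
      _ = ∑' m, ∫⁻ ω, ENNReal.ofReal (⟪ε k ω, c m⟫ * ⟪ε k ω, c m⟫) ∂μ := by
          refine lintegral_tsum fun m => ?_
          exact (ENNReal.measurable_ofReal.comp_aemeasurable
            ((hint k k (c m) (c m)).aestronglyMeasurable.aemeasurable))
      _ = ∑' m, ENNReal.ofReal (lam m) := by
          refine tsum_congr fun m => ?_
          rw [← ofReal_integral_eq_lintegral_ofReal (hint k k (c m) (c m))
            (Filter.Eventually.of_forall fun ω => mul_self_nonneg _), hvar k m]
  have hMfin : M ≠ ∞ := by
    rw [← key2 i]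
    have hInt : Integrable (fun ω => ‖ε i ω‖ ^ 2) μ := by
      have h := (hL2 i).integrable_norm_rpow (by norm_num) (by norm_num)
      have : ∀ ω : Ω, ‖ε i ω‖ ^ ((2 : ℝ≥0∞).toReal) = ‖ε i ω‖ ^ (2 : ℕ) := by
        intro ω
        rw [ENNReal.toReal_ofNat, show ((2:ℝ)) = ((2:ℕ):ℝ) by norm_num,
          Real.rpow_natCast]
      simpa [this] using h
    have h4 : ∀ ω : Ω, (‖ε i ω‖₊ : ℝ≥0∞) ^ 2 = ENNReal.ofReal (‖ε i ω‖ ^ 2) := fun ω => by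
      rw [ENNReal.ofReal_pow (norm_nonneg _), ofReal_norm, enorm_eq_nnnorm]
    simp_rw [h4]
    rw [← ofReal_integral_eq_lintegral_ofReal hInt
      (Filter.Eventually.of_forall fun ω => sq_nonneg _)]
    exact ENNReal.ofReal_ne_top
  -- Cauchy-Schwarz bound in lintegral form
  have hCS : ∀ k l : ℤ, ∫⁻ ω, (‖ε k ω‖₊ : ℝ≥0∞) * (‖ε l ω‖₊ : ℝ≥0∞) ∂μ ≤ M := by
    intro k l
    have hconj : Real.HolderConjugate 2 2 := Real.HolderConjugate.two_two
    have := ENNReal.lintegral_mul_le_Lp_mul_Lq μ hconj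
      ((hmeas k).enorm) ((hmeas l).enorm)
    have h2 : ∀ (x : H), ((‖x‖₊ : ℝ≥0∞)) ^ (2:ℝ) = (‖x‖₊ : ℝ≥0∞) ^ (2:ℕ) := fun x => by
      rw [show ((2:ℝ)) = ((2:ℕ):ℝ) by norm_num, ENNReal.rpow_natCast]
    simp only [Pi.mul_apply, h2] at this
    refine this.trans ?_
    simp only [enorm_eq_nnnorm, h2]
    rw [key2 k, key2 l, ← ENNReal.rpow_add_of_nonneg _ _ (by norm_num) (by norm_num)]
    norm_num
  -- the key computation
  have key : ∀ (T : ℕ → H →L[ℝ] H), Summable (fun ℓ => ‖T ℓ‖) →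
      (∀ᵐ ω ∂μ, HasSum (fun ℓ : ℕ => T ℓ (ε (i - (ℓ : ℤ)) ω)) (Z ω)) →
      ∀ (j k : ℕ) (v : H),
        ∫ ω, ⟪ε (i - (j : ℤ)) ω, c k⟫ * ⟪Z ω, v⟫ ∂μ = lam k * ⟪T j (c k), v⟫ := by
    intro T hT hTsum j k v
    set g : ℕ → Ω → ℝ := fun ℓ ω =>
      ⟪ε (i - (j : ℤ)) ω, c k⟫ * ⟪ε (i - (ℓ : ℤ)) ω, (ContinuousLinearMap.adjoint (T ℓ)) v⟫
      with hg
    have hgmeas : ∀ ℓ, AEStronglyMeasurable (g ℓ) μ := fun ℓ =>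
      (hint _ _ _ _).aestronglyMeasurable
    have hgbound : ∀ ℓ : ℕ, ∫⁻ ω, ‖g ℓ ω‖₊ ∂μ ≤ (‖T ℓ‖₊ * ‖v‖₊ : ℝ≥0) * M := by
      intro ℓ
      have hptw : ∀ ω : Ω, (‖g ℓ ω‖₊ : ℝ≥0∞) ≤
          (‖T ℓ‖₊ * ‖v‖₊ : ℝ≥0) * ((‖ε (i - (j:ℤ)) ω‖₊ : ℝ≥0∞) * (‖ε (i - (ℓ:ℤ)) ω‖₊)) := by
        intro ω
        have h1 : ‖g ℓ ω‖ ≤ (‖T ℓ‖ * ‖v‖) * (‖ε (i - (j:ℤ)) ω‖ * ‖ε (i - (ℓ:ℤ)) ω‖) := by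
          rw [hg]
          simp only [norm_mul]
          calc |⟪ε (i - (j:ℤ)) ω, c k⟫| * |⟪ε (i - (ℓ:ℤ)) ω, (ContinuousLinearMap.adjoint (T ℓ)) v⟫|
              ≤ (‖ε (i - (j:ℤ)) ω‖ * ‖c k‖) *
                (‖ε (i - (ℓ:ℤ)) ω‖ * ‖(ContinuousLinearMap.adjoint (T ℓ)) v‖) := by
                exact mul_le_mul (abs_real_inner_le_norm _ _) (abs_real_inner_le_norm _ _)
                  (abs_nonneg _) (by positivity)
            _ ≤ (‖T ℓ‖ * ‖v‖) * (‖ε (i - (j:ℤ)) ω‖ * ‖ε (i - (ℓ:ℤ)) ω‖) := by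
                have hc : ‖c k‖ = 1 := c.orthonormal.1 k
                have hadj : ‖(ContinuousLinearMap.adjoint (T ℓ)) v‖ ≤ ‖T ℓ‖ * ‖v‖ := by
                  calc ‖(ContinuousLinearMap.adjoint (T ℓ)) v‖
                      ≤ ‖ContinuousLinearMap.adjoint (T ℓ)‖ * ‖v‖ :=
                        ContinuousLinearMap.le_opNorm _ _
                    _ = ‖T ℓ‖ * ‖v‖ := by rw [LinearIsometryEquiv.norm_map ContinuousLinearMap.adjoint (T ℓ)]
                rw [hc, mul_one]
                calc ‖ε (i - (j:ℤ)) ω‖ * (‖ε (i - (ℓ:ℤ)) ω‖ * ‖(ContinuousLinearMap.adjoint (T ℓ)) v‖)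
                    ≤ ‖ε (i - (j:ℤ)) ω‖ * (‖ε (i - (ℓ:ℤ)) ω‖ * (‖T ℓ‖ * ‖v‖)) := by
                      exact mul_le_mul_of_nonneg_left
                        (mul_le_mul_of_nonneg_left hadj (norm_nonneg _)) (norm_nonneg _)
                  _ = (‖T ℓ‖ * ‖v‖) * (‖ε (i - (j:ℤ)) ω‖ * ‖ε (i - (ℓ:ℤ)) ω‖) := by ring
        calc (‖g ℓ ω‖₊ : ℝ≥0∞) = ENNReal.ofReal ‖g ℓ ω‖ := (ofReal_norm _).symm
          _ ≤ ENNReal.ofReal ((‖T ℓ‖ * ‖v‖) * (‖ε (i - (j:ℤ)) ω‖ * ‖ε (i - (ℓ:ℤ)) ω‖)) :=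
              ENNReal.ofReal_le_ofReal h1
          _ = (‖T ℓ‖₊ * ‖v‖₊ : ℝ≥0) * ((‖ε (i - (j:ℤ)) ω‖₊ : ℝ≥0∞) * (‖ε (i - (ℓ:ℤ)) ω‖₊)) := by
              rw [ENNReal.ofReal_mul (mul_nonneg (norm_nonneg (T ℓ)) (norm_nonneg v)),
                ENNReal.ofReal_mul (norm_nonneg (T ℓ)),
                ENNReal.ofReal_mul (norm_nonneg (ε (i - (j:ℤ)) ω))]
              simp [ofReal_norm, ENNReal.coe_mul]; rfl
      calc ∫⁻ ω, ‖g ℓ ω‖₊ ∂μ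
          ≤ ∫⁻ ω, (‖T ℓ‖₊ * ‖v‖₊ : ℝ≥0) *
            ((‖ε (i - (j:ℤ)) ω‖₊ : ℝ≥0∞) * (‖ε (i - (ℓ:ℤ)) ω‖₊)) ∂μ :=
            lintegral_mono fun ω => hptw ω
        _ = (‖T ℓ‖₊ * ‖v‖₊ : ℝ≥0) *
            ∫⁻ ω, (‖ε (i - (j:ℤ)) ω‖₊ : ℝ≥0∞) * (‖ε (i - (ℓ:ℤ)) ω‖₊) ∂μ :=
            lintegral_const_mul' _ _ ENNReal.coe_ne_top
        _ ≤ (‖T ℓ‖₊ * ‖v‖₊ : ℝ≥0) * M := mul_le_mul_right (hCS _ _) _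
    have hgsum : ∑' ℓ, ∫⁻ ω, ‖g ℓ ω‖₊ ∂μ ≠ ∞ := by
      have hle : ∑' ℓ, ∫⁻ ω, ‖g ℓ ω‖₊ ∂μ ≤ ∑' ℓ, ((‖T ℓ‖₊ * ‖v‖₊ : ℝ≥0) : ℝ≥0∞) * M :=
        ENNReal.tsum_le_tsum hgbound
      have hfin : ∑' ℓ, ((‖T ℓ‖₊ * ‖v‖₊ : ℝ≥0) : ℝ≥0∞) * M ≠ ∞ := by
        rw [ENNReal.tsum_mul_right]
        apply ENNReal.mul_ne_top _ hMfin
        simp_rw [ENNReal.coe_mul]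
        rw [ENNReal.tsum_mul_right]
        apply ENNReal.mul_ne_top _ ENNReal.coe_ne_top
        rw [ENNReal.tsum_coe_ne_top_iff_summable]
        rw [← NNReal.summable_coe]
        simpa using hT
      exact ne_top_of_le_ne_top hfin hle
    -- integral of each term
    have hterm : ∀ ℓ : ℕ, ∫ ω, g ℓ ω ∂μ = if ℓ = j then lam k * ⟪T j (c k), v⟫ else 0 := by
      intro ℓ
      by_cases hlj : ℓ = j
      · subst hlj
        simp only [if_pos rfl, hg]
        rw [hcov (i - (ℓ:ℤ)) (c k) ((ContinuousLinearMap.adjoint (T ℓ)) v), hCε k,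
          real_inner_smul_left, ContinuousLinearMap.adjoint_inner_right]
        simp
      · simp only [if_neg hlj, hg]
        have hne : (i - (ℓ:ℤ)) ≠ (i - (j:ℤ)) := by
          intro h
          apply hlj
          omega
        exact huncorr _ _ (Ne.symm hne) _ _
    -- a.e. identification of the sum
    have hae : ∀ᵐ ω ∂μ, ∑' ℓ, g ℓ ω = ⟪ε (i - (j:ℤ)) ω, c k⟫ * ⟪Z ω, v⟫ := by
      filter_upwards [hTsum] with ω hω
      have h1 : HasSum (fun ℓ : ℕ => ⟪T ℓ (ε (i - (ℓ:ℤ)) ω), v⟫) ⟪Z ω, v⟫ := by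
        simpa only [innerSL_apply_apply, real_inner_comm] using hω.mapL (innerSL ℝ v)
      have h2 : HasSum (fun ℓ : ℕ => ⟪ε (i - (j:ℤ)) ω, c k⟫ * ⟪T ℓ (ε (i - (ℓ:ℤ)) ω), v⟫)
          (⟪ε (i - (j:ℤ)) ω, c k⟫ * ⟪Z ω, v⟫) := h1.mul_left _
      have h3 : (fun ℓ : ℕ => ⟪ε (i - (j:ℤ)) ω, c k⟫ * ⟪T ℓ (ε (i - (ℓ:ℤ)) ω), v⟫) = fun ℓ => g ℓ ω := by
        funext ℓ
        simp only [hg, ContinuousLinearMap.adjoint_inner_right]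
      rw [h3] at h2
      exact h2.tsum_eq
    have hswap : ∫ ω, ∑' ℓ, g ℓ ω ∂μ = ∑' ℓ, ∫ ω, g ℓ ω ∂μ := integral_tsum hgmeas hgsum
    calc ∫ ω, ⟪ε (i - (j:ℤ)) ω, c k⟫ * ⟪Z ω, v⟫ ∂μ
        = ∫ ω, ∑' ℓ, g ℓ ω ∂μ := (integral_congr_ae hae).symm
      _ = ∑' ℓ, ∫ ω, g ℓ ω ∂μ := hswap
      _ = lam k * ⟪T j (c k), v⟫ := by
          simp_rw [hterm]
          rw [tsum_eq_single j (fun b hb => by simp [hb])]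
          simp
  -- conclude
  intro j
  have hAB : ∀ k : ℕ, A j (c k) = B j (c k) := by
    intro k
    apply ext_inner_right ℝ
    intro v
    have h1 := key A hA (hsum.mono fun ω h => h.1) j k v
    have h2 := key B hB (hsum.mono fun ω h => h.2) j k v
    have h3 : lam k * ⟪A j (c k), v⟫ = lam k * ⟪B j (c k), v⟫ := by rw [← h1, ← h2]
    exact mul_left_cancel₀ (hlam k).ne' h3
  apply ContinuousLinearMap.ext_on (Submodule.dense_iff_topologicalClosure_eq_top.mpr c.dense_span)
  rintro x ⟨k, rfl⟩
  exact hAB k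
end
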